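/- For each natural number r, the function G_r : ℂ → ℝ defined by G_r(z) = ∫₀¹ ln |f_{r,z}(t)| dt, with f_{r,z}(t) = Σ_{j=0}^{r+1} z^j/j! + t^{r+1} z^{r+2}/(r+1)!, is continuous on all of ℂ. -/

import Mathlib

open MeasureTheory Finset

noncomputable def fT (r : ℕ) (z : ℂ) (t : ℝ) : ℂ :=
  (∑ j ∈ Finset.range (r + 2), z ^ j / (j.factorial : ℂ)) +
    (t : ℂ) ^ (r + 1) * z ^ (r + 2) / ((r + 1).factorial : ℂ)

noncomputable def Fms (r : ℕ) (z : ℂ) : ℝ :=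
  ∫ t in (0:ℝ)..1, ‖fT r z t‖ ^ 2

noncomputable def Gas (r : ℕ) (z : ℂ) : ℝ :=
  ∫ t in (0:ℝ)..1, Real.log ‖fT r z t‖

section Aux

open MeasureTheory intervalIntegral

lemma rpow_neg_base_eq_zero {x : ℝ} (hx : x < 0) {y : ℝ} (hy : y = 2⁻¹ ∨ y = -2⁻¹) : x ^ y = 0 := by
  rw [Real.rpow_def_of_neg hx]
  rcases hy with h | h <;> rw [h]
  · rw [show ((2⁻¹:ℝ) * Real.pi) = Real.pi/2 by ring]; simp [Real.cos_pi_div_two]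
  · rw [show ((-2⁻¹:ℝ) * Real.pi) = -(Real.pi/2) by ring]; simp [Real.cos_pi_div_two]

lemma rpow_half_nonneg (x : ℝ) : 0 ≤ x ^ (2⁻¹:ℝ) := by
  rcases lt_or_ge x 0 with h | h
  · rw [rpow_neg_base_eq_zero h (Or.inl rfl)]
  · exact Real.rpow_nonneg h _

lemma abs_rpow_split (s : ℝ) : |s| ^ (-2⁻¹:ℝ) = s ^ (-2⁻¹:ℝ) + (-s) ^ (-2⁻¹:ℝ) := by
  rcases lt_trichotomy s 0 with h | h | h
  · rw [abs_of_neg h, rpow_neg_base_eq_zero h (Or.inr rfl), zero_add]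
  · simp [h, Real.zero_rpow (by norm_num : (-2⁻¹:ℝ) ≠ 0)]
  · rw [abs_of_pos h, rpow_neg_base_eq_zero (neg_neg_of_pos h) (Or.inr rfl), add_zero]

lemma II_abs_rpow (a l r : ℝ) :
    IntervalIntegrable (fun t => |t - a| ^ (-2⁻¹:ℝ)) volume l r := by
  have h1 : IntervalIntegrable (fun s : ℝ => |s| ^ (-2⁻¹:ℝ)) volume (l - a) (r - a) := by
    have e : (fun s : ℝ => |s| ^ (-2⁻¹:ℝ))
        = (fun s : ℝ => s ^ (-2⁻¹:ℝ)) + (fun s : ℝ => (-s) ^ (-2⁻¹:ℝ)) := by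
      funext s; exact abs_rpow_split s
    rw [e]
    refine (intervalIntegrable_rpow' (by norm_num)).add ?_
    have := (intervalIntegrable_rpow' (a := -(l-a)) (b := -(r-a)) (r := (-2⁻¹:ℝ)) (by norm_num))
    have := (IntervalIntegrable.iff_comp_neg (by simp)).mp this
    simpa using this
  simpa using h1.comp_sub_right a

lemma int_abs_rpow_le (a : ℝ) (ha0 : 0 ≤ a) (ha2 : a ≤ 2) :
    (∫ t in (0:ℝ)..1, |t - a| ^ (-2⁻¹:ℝ)) ≤ 6 := by
  have e1 : (∫ t in (0:ℝ)..1, |t - a| ^ (-2⁻¹:ℝ))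
      = ∫ s in (0 - a)..(1 - a), |s| ^ (-2⁻¹:ℝ) := by
    rw [← intervalIntegral.integral_comp_sub_right (fun s => |s| ^ (-2⁻¹:ℝ)) a]
  have hI1 : IntervalIntegrable (fun s : ℝ => s ^ (-2⁻¹:ℝ)) volume (0-a) (1-a) :=
    intervalIntegrable_rpow' (by norm_num)
  have hI2 : IntervalIntegrable (fun s : ℝ => (-s) ^ (-2⁻¹:ℝ)) volume (0-a) (1-a) := by
    have := (intervalIntegrable_rpow' (a := -(0-a)) (b := -(1-a)) (r := (-2⁻¹:ℝ)) (by norm_num))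
    have := (IntervalIntegrable.iff_comp_neg (by simp)).mp this
    simpa using this
  have e2 : (∫ s in (0 - a)..(1 - a), |s| ^ (-2⁻¹:ℝ))
      = (∫ s in (0 - a)..(1 - a), s ^ (-2⁻¹:ℝ)) + ∫ s in (0 - a)..(1 - a), (-s) ^ (-2⁻¹:ℝ) := by
    rw [← intervalIntegral.integral_add hI1 hI2]
    exact intervalIntegral.integral_congr (fun s _ => abs_rpow_split s)
  have v1 : (∫ s in (0 - a)..(1 - a), s ^ (-2⁻¹:ℝ))
      = ((1-a) ^ (2⁻¹:ℝ) - (0-a) ^ (2⁻¹:ℝ)) / (2⁻¹) := by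
    rw [integral_rpow (Or.inl (by norm_num))]; norm_num
  have v2 : (∫ s in (0 - a)..(1 - a), (-s) ^ (-2⁻¹:ℝ))
      = (a ^ (2⁻¹:ℝ) - (a-1) ^ (2⁻¹:ℝ)) / (2⁻¹) := by
    rw [intervalIntegral.integral_comp_neg (fun s => s ^ (-2⁻¹:ℝ))]
    rw [integral_rpow (Or.inl (by norm_num))]
    norm_num
  have b1 : (1-a) ^ (2⁻¹:ℝ) ≤ 1 := by
    rcases lt_or_ge (1-a) 0 with h | h
    · rw [rpow_neg_base_eq_zero h (Or.inl rfl)]; norm_num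
    · calc (1-a) ^ (2⁻¹:ℝ) ≤ 1 ^ (2⁻¹:ℝ) := Real.rpow_le_rpow h (by linarith) (by norm_num)
        _ = 1 := Real.one_rpow _
  have b2 : a ^ (2⁻¹:ℝ) ≤ 2 := by
    calc a ^ (2⁻¹:ℝ) ≤ 2 ^ (2⁻¹:ℝ) := Real.rpow_le_rpow ha0 ha2 (by norm_num)
      _ ≤ 2 ^ (1:ℝ) := Real.rpow_le_rpow_of_exponent_le (by norm_num) (by norm_num)
      _ = 2 := Real.rpow_one 2
  have n1 : 0 ≤ (0-a) ^ (2⁻¹:ℝ) := rpow_half_nonneg _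
  have n2 : 0 ≤ (a-1) ^ (2⁻¹:ℝ) := rpow_half_nonneg _
  rw [e1, e2, v1, v2]
  have h8 : ((1-a) ^ (2⁻¹:ℝ) - (0-a) ^ (2⁻¹:ℝ)) / (2⁻¹)
      = 2 * ((1-a) ^ (2⁻¹:ℝ) - (0-a) ^ (2⁻¹:ℝ)) := by ring
  have h9 : (a ^ (2⁻¹:ℝ) - (a-1) ^ (2⁻¹:ℝ)) / (2⁻¹)
      = 2 * (a ^ (2⁻¹:ℝ) - (a-1) ^ (2⁻¹:ℝ)) := by ring
  rw [h8, h9]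
  nlinarith

lemma log_le_mul_rpow {y q : ℝ} (hy : 0 < y) (hq : 0 < q) : Real.log y ≤ q * y ^ q⁻¹ := by
  have h1 : Real.log (y ^ q⁻¹) = q⁻¹ * Real.log y := Real.log_rpow hy _
  have h2 : Real.log (y ^ q⁻¹) ≤ y ^ q⁻¹ := by
    have := Real.log_le_sub_one_of_pos (Real.rpow_pos_of_pos hy q⁻¹)
    linarith
  calc Real.log y = q * (q⁻¹ * Real.log y) := by field_simp
    _ = q * Real.log (y ^ q⁻¹) := by rw [h1]
    _ ≤ q * y ^ q⁻¹ := by nlinarith [h2, hq.le]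

lemma rpow_chain {p : ℕ} (hp : p ≠ 0) {ε c x s : ℝ} (hε : 0 < ε) (hc : 0 < c) (hs : s ≠ 0)
    (hx : c * |s| ^ p ≤ x) :
    Real.log (ε / x) ≤ (2*p) * (ε/c) ^ ((2*(p:ℝ))⁻¹) * |s| ^ (-2⁻¹:ℝ) := by
  have hsp : 0 < |s| ^ p := pow_pos (abs_pos.2 hs) p
  have hxpos : 0 < x := lt_of_lt_of_le (by positivity) hx
  have hq : (0:ℝ) < 2*p := by
    have : (1:ℝ) ≤ (p:ℝ) := by exact_mod_cast Nat.one_le_iff_ne_zero.2 hp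
    linarith
  have h1 : Real.log (ε / x) ≤ (2*(p:ℝ)) * (ε / x) ^ ((2*(p:ℝ))⁻¹) :=
    log_le_mul_rpow (div_pos hε hxpos) hq
  have h2 : ε / x ≤ ε / (c * |s| ^ p) := by gcongr
  have h3 : (ε / x) ^ ((2*(p:ℝ))⁻¹) ≤ (ε / (c * |s| ^ p)) ^ ((2*(p:ℝ))⁻¹) :=
    Real.rpow_le_rpow (by positivity) h2 (by positivity)
  have h4 : (ε / (c * |s| ^ p)) ^ ((2*(p:ℝ))⁻¹)
      = (ε/c) ^ ((2*(p:ℝ))⁻¹) * |s| ^ (-2⁻¹:ℝ) := by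
    have e1 : ε / (c * |s| ^ p) = (ε/c) * (|s| ^ p)⁻¹ := by field_simp
    rw [e1, Real.mul_rpow (by positivity) (by positivity),
      Real.inv_rpow (by positivity), ← Real.rpow_neg (by positivity)]
    rw [← Real.rpow_natCast |s| p, ← Real.rpow_mul (abs_nonneg s)]
    congr 1
    have hp' : (p:ℝ) ≠ 0 := by exact_mod_cast hp
    have hp2 : (2:ℝ) * (p:ℝ) ≠ 0 := by positivity
    congr 1
    field_simp
  calc Real.log (ε / x) ≤ (2*(p:ℝ)) * (ε / x) ^ ((2*(p:ℝ))⁻¹) := h1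
    _ ≤ (2*(p:ℝ)) * ((ε/c) ^ ((2*(p:ℝ))⁻¹) * |s| ^ (-2⁻¹:ℝ)) := by
        rw [← h4]; nlinarith [h3, hq.le]
    _ = (2*p) * (ε/c) ^ ((2*(p:ℝ))⁻¹) * |s| ^ (-2⁻¹:ℝ) := by ring

noncomputable def xf (p : ℕ) (A B : ℂ) (t : ℝ) : ℝ := ‖A + (t:ℂ)^p * B‖

lemma xf_cont (p : ℕ) : Continuous (fun q : (ℂ × ℂ) × ℝ => xf p q.1.1 q.1.2 q.2) := by
  unfold xf
  exact continuous_norm.comp (by fun_prop)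

lemma pow_sub_pow_ge {p : ℕ} (hp : p ≠ 0) {t a : ℝ} (ht : 0 ≤ t) (ha : 0 ≤ a) :
    |t - a| ^ p ≤ |t ^ p - a ^ p| := by
  rcases le_total a t with h | h
  · rw [abs_of_nonneg (sub_nonneg.2 h), abs_of_nonneg (sub_nonneg.2 (pow_le_pow_left₀ ha h p))]
    have h1 := pow_add_pow_le (sub_nonneg.2 h) ha hp
    have h2 : t - a + a = t := by ring
    rw [h2] at h1
    linarith
  · rw [abs_of_nonpos (sub_nonpos.2 h), abs_of_nonpos (sub_nonpos.2 (pow_le_pow_left₀ ht h p))]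
    have h1 := pow_add_pow_le (sub_nonneg.2 h) ht hp
    have h2 : a - t + t = a := by ring
    rw [h2] at h1
    have h3 : (-(t-a)) = a - t := by ring
    rw [h3]
    linarith

lemma xf_lower {p : ℕ} (hp : p ≠ 0) {A B : ℂ} (hB : B ≠ 0) :
    ∃ a : ℝ, 0 ≤ a ∧ ∀ t : ℝ, 0 ≤ t →
      ‖B‖ * |t - a| ^ p ≤ xf p A B t := by
  set u := (-A/B).re with hu
  refine ⟨(max u 0) ^ ((p:ℝ))⁻¹, Real.rpow_nonneg (le_max_right _ _) _, fun t ht => ?_⟩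
  set a := (max u 0) ^ ((p:ℝ))⁻¹ with haa
  have ha0 : 0 ≤ a := Real.rpow_nonneg (le_max_right _ _) _
  have hp' : (p:ℝ) ≠ 0 := by exact_mod_cast hp
  have hap : a ^ p = max u 0 := by
    rw [haa, ← Real.rpow_natCast ((max u 0) ^ ((p:ℝ))⁻¹) p, ← Real.rpow_mul (le_max_right u 0),
      inv_mul_cancel₀ hp', Real.rpow_one]
  have key : A + (t:ℂ)^p * B = B * ((t:ℂ)^p - (-A/B)) := by
    field_simp
    ring
  have hre : ((t:ℂ)^p - (-A/B)).re = t^p - u := by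
    have hc : (t:ℂ)^p = ((t^p : ℝ) : ℂ) := by push_cast; ring
    rw [Complex.sub_re, hc, Complex.ofReal_re, hu]
  have step1 : |t - a| ^ p ≤ |t^p - u| := by
    calc |t - a| ^ p ≤ |t ^ p - a ^ p| := pow_sub_pow_ge hp ht ha0
      _ = |t ^ p - max u 0| := by rw [hap]
      _ ≤ |t ^ p - u| := by
          rcases le_or_gt 0 u with h | h
          · rw [max_eq_left h]
          · rw [max_eq_right h.le, sub_zero, abs_of_nonneg (pow_nonneg ht p),
              abs_of_nonneg (by nlinarith [pow_nonneg ht p] : (0:ℝ) ≤ t ^ p - u)]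
            linarith
  have step2 : |t^p - u| ≤ ‖(t:ℂ)^p - (-A/B)‖ := by
    rw [← hre]
    exact Complex.abs_re_le_norm _
  unfold xf
  rw [key, norm_mul]
  have hBpos : 0 < ‖B‖ := norm_pos_iff.mpr hB
  nlinarith [step1.trans step2, hBpos.le, pow_nonneg (abs_nonneg (t-a)) p]

lemma ae_ne_restrict (a : ℝ) (s : Set ℝ) :
    ∀ᵐ t ∂(volume.restrict s), t ≠ a := by
  refine MeasureTheory.ae_restrict_of_ae ?_
  rw [MeasureTheory.ae_iff]
  have : {t : ℝ | ¬ t ≠ a} = {a} := by ext t; simp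
  rw [this]
  exact measure_singleton a

lemma xf_pos {p : ℕ} (hp : p ≠ 0) {A B : ℂ} (hB : B ≠ 0) {a : ℝ}
    (ha : ∀ t : ℝ, 0 ≤ t → ‖B‖ * |t - a| ^ p ≤ xf p A B t)
    {t : ℝ} (ht : 0 ≤ t) (hta : t ≠ a) : 0 < xf p A B t := by
  have h1 : 0 < ‖B‖ * |t - a| ^ p := by
    have := norm_pos_iff.mpr hB
    have h2 : 0 < |t - a| := abs_pos.2 (sub_ne_zero.2 hta)
    positivity
  exact h1.trans_le (ha t ht)

lemma xf_le {p : ℕ} {A B : ℂ} {t : ℝ} (ht0 : 0 ≤ t) (ht1 : t ≤ 1) :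
    xf p A B t ≤ ‖A‖ + ‖B‖ := by
  unfold xf
  refine (norm_add_le _ _).trans ?_
  gcongr
  rw [norm_mul, norm_pow]
  have h1 : ‖(t:ℂ)‖ = t := by rw [Complex.norm_real, Real.norm_eq_abs, abs_of_nonneg ht0]
  rw [h1]
  have h2 : t ^ p ≤ 1 := pow_le_one₀ ht0 ht1
  nlinarith [norm_nonneg B, h2, pow_nonneg ht0 p]

lemma log_xf_integrable {p : ℕ} (hp : p ≠ 0) {A B : ℂ} (hB : B ≠ 0) :
    IntervalIntegrable (fun t => Real.log (xf p A B t)) volume 0 1 := by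
  obtain ⟨a, ha0, halow⟩ := xf_lower hp (A := A) hB
  set c := ‖B‖ with hc
  have hcpos : 0 < c := norm_pos_iff.mpr hB
  set M := ‖A‖ + ‖B‖ with hM
  have hMnn : 0 ≤ M := by positivity
  set g : ℝ → ℝ := fun t => (M + 1) + (2*p) * (1/c) ^ ((2*(p:ℝ))⁻¹) * |t - a| ^ (-2⁻¹:ℝ)
    with hg
  have hgI : IntervalIntegrable g volume 0 1 := by
    refine (intervalIntegrable_const.add ?_)
    exact (II_abs_rpow a 0 1).const_mul _
  refine hgI.mono_fun' ?_ ?_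
  · refine ((Real.measurable_log.comp ?_).aestronglyMeasurable)
    exact (continuous_norm.comp (by fun_prop : Continuous
      (fun t : ℝ => A + (t:ℂ)^p * B))).measurable
  · have h1 := ae_ne_restrict a (Set.uIoc (0:ℝ) 1)
    have h2 := MeasureTheory.ae_restrict_mem (μ := volume) (measurableSet_uIoc (a := (0:ℝ)) (b := 1))
    filter_upwards [h1, h2] with t hta htm
    rw [Set.uIoc_of_le (by norm_num : (0:ℝ) ≤ 1)] at htm
    have ht0 : 0 ≤ t := htm.1.le
    have ht1 : t ≤ 1 := htm.2
    have hxpos := xf_pos hp hB halow ht0 hta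
    have hub : Real.log (xf p A B t) ≤ M := by
      have := Real.log_le_sub_one_of_pos hxpos
      have := xf_le (p := p) (A := A) (B := B) ht0 ht1
      linarith
    have hlb : -Real.log (xf p A B t) ≤ (2*p) * (1/c) ^ ((2*(p:ℝ))⁻¹) * |t - a| ^ (-2⁻¹:ℝ) := by
      have h3 : -Real.log (xf p A B t) = Real.log (1 / xf p A B t) := by
        rw [one_div, Real.log_inv]
      rw [h3]
      exact rpow_chain hp one_pos hcpos (sub_ne_zero.2 hta) (halow t ht0)
    have hrpnn : 0 ≤ (2*(p:ℝ)) * (1/c) ^ ((2*(p:ℝ))⁻¹) * |t - a| ^ (-2⁻¹:ℝ) := by positivity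
    rw [Real.norm_eq_abs, abs_le]
    constructor
    · simp only [hg]; linarith
    · simp only [hg]; linarith

noncomputable def Kf (p : ℕ) (P : ℂ × ℂ) : ℝ := ∫ t in (0:ℝ)..1, Real.log (xf p P.1 P.2 t)

noncomputable def Kfe (p : ℕ) (ε : ℝ) (P : ℂ × ℂ) : ℝ :=
  ∫ t in (0:ℝ)..1, Real.log (max ε (xf p P.1 P.2 t))

lemma Kfe_cont (p : ℕ) {ε : ℝ} (hε : 0 < ε) : Continuous (Kfe p ε) := by
  unfold Kfe
  refine intervalIntegral.continuous_parametric_intervalIntegral_of_continuous'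
    (f := fun (P : ℂ × ℂ) (t : ℝ) => Real.log (max ε (xf p P.1 P.2 t))) (μ := volume) ?_ 0 1
  have hmax : Continuous (fun q : (ℂ × ℂ) × ℝ => max ε (xf p q.1.1 q.1.2 q.2)) :=
    continuous_const.max (xf_cont p)
  refine Real.continuousOn_log.comp_continuous hmax (fun q => ?_)
  have : 0 < max ε (xf p q.1.1 q.1.2 q.2) := lt_max_of_lt_left hε
  simpa using this.ne'

lemma log_max_integrable (p : ℕ) {ε : ℝ} (hε : 0 < ε) (A B : ℂ) :
    IntervalIntegrable (fun t => Real.log (max ε (xf p A B t))) volume 0 1 := by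
  refine Continuous.intervalIntegrable ?_ 0 1
  have hmax : Continuous (fun t : ℝ => max ε (xf p A B t)) := by
    refine continuous_const.max ?_
    exact continuous_norm.comp (by fun_prop : Continuous (fun t : ℝ => A + (t:ℂ)^p * B))
  refine Real.continuousOn_log.comp_continuous hmax (fun t => ?_)
  have : 0 < max ε (xf p A B t) := lt_max_of_lt_left hε
  simpa using this.ne'

lemma Kfe_sub_Kf {p : ℕ} (hp : p ≠ 0) {c ε : ℝ} (hc : 0 < c) (hε : 0 < ε) (hεc : ε ≤ c)
    {A B : ℂ} (hB : c ≤ ‖B‖) :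
    |Kfe p ε (A, B) - Kf p (A, B)| ≤ (2*p) * (ε/c) ^ ((2*(p:ℝ))⁻¹) * 6 := by
  have hBne : B ≠ 0 := by
    intro h; rw [h] at hB; simp at hB; linarith
  obtain ⟨a, ha0, halow⟩ := xf_lower hp (A := A) hBne
  have hclow : ∀ t : ℝ, 0 ≤ t → c * |t - a| ^ p ≤ xf p A B t := by
    intro t ht
    refine le_trans ?_ (halow t ht)
    have : (0:ℝ) ≤ |t - a| ^ p := by positivity
    nlinarith
  rcases le_or_gt 2 a with ha2 | ha2
  · -- far case : integrands agree
    have heq : Kfe p ε (A, B) = Kf p (A, B) := by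
      unfold Kfe Kf
      refine intervalIntegral.integral_congr (fun t ht => ?_)
      rw [Set.uIcc_of_le (by norm_num : (0:ℝ) ≤ 1)] at ht
      have ht0 : 0 ≤ t := ht.1
      have ht1 : t ≤ 1 := ht.2
      have h1 : (1:ℝ) ≤ |t - a| := by
        rw [abs_of_nonpos (by linarith), neg_sub]; linarith
      have h2 : (1:ℝ) ≤ |t - a| ^ p := one_le_pow₀ h1
      have h3 : ε ≤ xf p A B t := by
        have := hclow t ht0
        nlinarith
      rw [max_eq_right h3]
    rw [heq, sub_self, abs_zero]
    positivity
  · -- near case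
    set C := (2*(p:ℝ)) * (ε/c) ^ ((2*(p:ℝ))⁻¹) with hC
    have hCnn : 0 ≤ C := by positivity
    have hIlog : IntervalIntegrable (fun t => Real.log (xf p A B t)) volume 0 1 :=
      log_xf_integrable hp hBne
    have hImax := log_max_integrable p hε A B
    have hsub : Kfe p ε (A, B) - Kf p (A, B)
        = ∫ t in (0:ℝ)..1, (Real.log (max ε (xf p A B t)) - Real.log (xf p A B t)) := by
      unfold Kfe Kf
      rw [intervalIntegral.integral_sub hImax hIlog]
    have hgI : IntervalIntegrable (fun t => C * |t - a| ^ (-2⁻¹:ℝ)) volume 0 1 :=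
      (II_abs_rpow a 0 1).const_mul _
    have hbound : ∀ᵐ t ∂(volume.restrict (Set.uIoc (0:ℝ) 1)),
        ‖Real.log (max ε (xf p A B t)) - Real.log (xf p A B t)‖ ≤ C * |t - a| ^ (-2⁻¹:ℝ) := by
      have h1 := ae_ne_restrict a (Set.uIoc (0:ℝ) 1)
      have h2 := MeasureTheory.ae_restrict_mem (μ := volume)
        (measurableSet_uIoc (a := (0:ℝ)) (b := 1))
      filter_upwards [h1, h2] with t hta htm
      rw [Set.uIoc_of_le (by norm_num : (0:ℝ) ≤ 1)] at htm
      have ht0 : 0 ≤ t := htm.1.le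
      have hxpos := xf_pos hp hBne halow ht0 hta
      have hd0 : 0 ≤ Real.log (max ε (xf p A B t)) - Real.log (xf p A B t) :=
        sub_nonneg.2 (Real.log_le_log hxpos (le_max_right _ _))
      rw [Real.norm_eq_abs, abs_of_nonneg hd0]
      rcases le_or_gt ε (xf p A B t) with h | h
      · rw [max_eq_right h, sub_self]
        positivity
      · rw [max_eq_left h.le]
        have : Real.log ε - Real.log (xf p A B t) = Real.log (ε / xf p A B t) := by
          rw [Real.log_div hε.ne' hxpos.ne']
        rw [this]
        exact rpow_chain hp hε hc (sub_ne_zero.2 hta) (hclow t ht0)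
    have hnorm := intervalIntegral.norm_integral_le_of_norm_le (by norm_num)
      (by have := (ae_restrict_iff' measurableSet_uIoc).mp hbound; rwa [Set.uIoc_of_le (by norm_num : (0:ℝ) ≤ 1)] at this) hgI
    rw [← hsub] at hnorm
    have hInn : 0 ≤ ∫ t in (0:ℝ)..1, |t - a| ^ (-2⁻¹:ℝ) := by
      refine intervalIntegral.integral_nonneg (by norm_num) (fun t _ => ?_)
      positivity
    have hval : (∫ t in (0:ℝ)..1, C * |t - a| ^ (-2⁻¹:ℝ))
        = C * ∫ t in (0:ℝ)..1, |t - a| ^ (-2⁻¹:ℝ) := by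
      rw [intervalIntegral.integral_const_mul]
    have hle6 := int_abs_rpow_le a ha0 ha2.le
    rw [Real.norm_eq_abs] at hnorm
    have h9 : |∫ t in (0:ℝ)..1, C * |t - a| ^ (-2⁻¹:ℝ)| ≤ C * 6 := by
      rw [hval, abs_of_nonneg (by positivity)]
      nlinarith
    calc |Kfe p ε (A, B) - Kf p (A, B)| ≤ _ := hnorm
      _ ≤ C * 6 := (le_abs_self _).trans h9

lemma Kf_continuousOn {p : ℕ} (hp : p ≠ 0) {c : ℝ} (hc : 0 < c) :
    ContinuousOn (Kf p) {P : ℂ × ℂ | c ≤ ‖P.2‖} := by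
  set F : ℕ → (ℂ × ℂ) → ℝ := fun n P => Kfe p (((n:ℝ)+1)⁻¹) P with hF
  have hεpos : ∀ n : ℕ, (0:ℝ) < ((n:ℝ)+1)⁻¹ := fun n => by positivity
  have hunif : TendstoUniformlyOn F (Kf p) Filter.atTop {P : ℂ × ℂ | c ≤ ‖P.2‖} := by
    rw [Metric.tendstoUniformlyOn_iff]
    intro δ hδ
    have htend : Filter.Tendsto (fun n : ℕ => (2*(p:ℝ)) * ((((n:ℝ)+1)⁻¹)/c) ^ ((2*(p:ℝ))⁻¹) * 6)
        Filter.atTop (nhds 0) := by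
      have h1 : Filter.Tendsto (fun n : ℕ => (((n:ℝ)+1)⁻¹)/c) Filter.atTop (nhds 0) := by
        have := tendsto_one_div_add_atTop_nhds_zero_nat (𝕜 := ℝ)
        have h2 := this.div_const c
        simpa [one_div] using h2
      have h3 : Filter.Tendsto (fun x : ℝ => (2*(p:ℝ)) * x ^ ((2*(p:ℝ))⁻¹) * 6)
          (nhds 0) (nhds 0) := by
        have h4 : Filter.Tendsto (fun x : ℝ => x ^ ((2*(p:ℝ))⁻¹)) (nhds 0) (nhds 0) := by
          have hppos : (0:ℝ) < (2*(p:ℝ))⁻¹ := by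
            have : (1:ℝ) ≤ (p:ℝ) := by exact_mod_cast Nat.one_le_iff_ne_zero.2 hp
            positivity
          have h5 := (Real.continuousAt_rpow_const 0 ((2*(p:ℝ))⁻¹) (Or.inr hppos.le)).tendsto
          rwa [Real.zero_rpow hppos.ne'] at h5
        have := (h4.const_mul (2*(p:ℝ))).mul_const 6
        simpa using this
      exact h3.comp h1
    have hev1 := htend.eventually_lt_const hδ
    have hev2 : ∀ᶠ n : ℕ in Filter.atTop, ((n:ℝ)+1)⁻¹ ≤ c := by
      have : Filter.Tendsto (fun n : ℕ => ((n:ℝ)+1)⁻¹) Filter.atTop (nhds 0) := by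
        have := tendsto_one_div_add_atTop_nhds_zero_nat (𝕜 := ℝ)
        simpa [one_div] using this
      exact this.eventually_le_const hc
    filter_upwards [hev1, hev2] with n h1 h2
    intro P hP
    obtain ⟨A, B⟩ := P
    have hb := Kfe_sub_Kf hp hc (hεpos n) h2 (A := A) (B := B) hP
    rw [Real.dist_eq, abs_sub_comm]
    exact lt_of_le_of_lt hb h1
  exact hunif.continuousOn
    (Filter.Eventually.of_forall fun n => (Kfe_cont p (hεpos n)).continuousOn).frequently

end Aux

theorem stmt4 (r : ℕ) : Continuous (Gas r) := by
  set p := r + 1 with hp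
  have hpne : p ≠ 0 := by omega
  set Pz : ℂ → ℂ := fun z => ∑ j ∈ Finset.range (r + 2), z ^ j / (j.factorial : ℂ) with hPz
  set Qz : ℂ → ℂ := fun z => z ^ (r + 2) / ((r + 1).factorial : ℂ) with hQz
  have hPc : Continuous Pz := by
    rw [hPz]
    exact continuous_finset_sum _ (fun j _ => (continuous_pow j).div_const _)
  have hQc : Continuous Qz := (continuous_pow (r+2)).div_const _
  have hg : Continuous fun z => (Pz z, Qz z) := hPc.prodMk hQc
  have hGas : Gas r = fun z => Kf p (Pz z, Qz z) := by
    funext z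
    unfold Gas Kf xf fT
    simp only [hPz, hQz, mul_div_assoc]
    rfl
  rw [continuous_iff_continuousAt]
  intro z₀
  rw [hGas]
  rcases eq_or_ne z₀ 0 with h0 | h0
  · subst h0
    set U := {z : ℂ | ‖Pz z - 1‖ < 4⁻¹ ∧ ‖Qz z‖ < 4⁻¹} with hU
    have hUopen : IsOpen U := by
      refine IsOpen.inter ?_ ?_
      · exact isOpen_lt (continuous_norm.comp (hPc.sub continuous_const)) continuous_const
      · exact isOpen_lt (continuous_norm.comp hQc) continuous_const
    have hP0 : Pz 0 = 1 := by
      have he : Pz 0 = ∑ j ∈ Finset.range (r + 2), (0:ℂ) ^ j / (j.factorial : ℂ) := rfl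
      rw [he, Finset.sum_eq_single 0]
      · simp
      · intro j _ hj
        rw [zero_pow hj, zero_div]
      · intro h; simp at h
    have hU0 : (0:ℂ) ∈ U := by
      constructor
      · show ‖Pz 0 - 1‖ < 4⁻¹
        rw [hP0]; simp
      · show ‖Qz 0‖ < 4⁻¹
        have : Qz 0 = 0 := by rw [hQz]; simp
        rw [this]; simp
    have hKfe := Kfe_cont p (by norm_num : (0:ℝ) < 2⁻¹)
    have heq : ∀ z ∈ U, Kf p (Pz z, Qz z) = Kfe p 2⁻¹ (Pz z, Qz z) := by
      intro z hz
      unfold Kf Kfe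
      refine intervalIntegral.integral_congr fun t ht => ?_
      rw [Set.uIcc_of_le (by norm_num : (0:ℝ) ≤ 1)] at ht
      have hx : (2⁻¹:ℝ) ≤ xf p (Pz z) (Qz z) t := by
        unfold xf
        have h1 : ‖Pz z‖ ≥ 3/4 := by
          have h4 := hz.1
          have h3 : ‖(1:ℂ)‖ ≤ ‖Pz z‖ + ‖Pz z - 1‖ := by
            calc ‖(1:ℂ)‖ = ‖Pz z - (Pz z - 1)‖ := by norm_num
              _ ≤ ‖Pz z‖ + ‖Pz z - 1‖ := by
                  have h6 := norm_add_le (Pz z) (-(Pz z - 1))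
                  rw [norm_neg] at h6
                  simpa [sub_eq_add_neg] using h6
          simp only [norm_one] at h3
          linarith
        have h7 : ‖(t:ℂ) ^ p * Qz z‖ ≤ 4⁻¹ := by
          rw [norm_mul, norm_pow, Complex.norm_real, Real.norm_eq_abs, abs_of_nonneg ht.1]
          have h8 : t ^ p ≤ 1 := pow_le_one₀ ht.1 ht.2
          have h9 := hz.2
          nlinarith [norm_nonneg (Qz z), pow_nonneg ht.1 p]
        have h10 : ‖Pz z + (t:ℂ) ^ p * Qz z‖
            ≥ ‖Pz z‖ - ‖(t:ℂ) ^ p * Qz z‖ := by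
          have h11 := norm_add_le (Pz z + (t:ℂ) ^ p * Qz z) (-((t:ℂ) ^ p * Qz z))
          rw [norm_neg, add_neg_cancel_right] at h11
          linarith
        linarith
      rw [max_eq_right hx]
    have hev : (fun z => Kfe p 2⁻¹ (Pz z, Qz z)) =ᶠ[nhds (0:ℂ)]
        (fun z => Kf p (Pz z, Qz z)) :=
      Filter.eventuallyEq_of_mem (hUopen.mem_nhds hU0) (fun z hz => (heq z hz).symm)
    exact ((hKfe.comp hg).continuousAt).congr hev
  · have hQ0 : Qz z₀ ≠ 0 := by
      rw [hQz]
      exact div_ne_zero (pow_ne_zero _ h0)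
        (Nat.cast_ne_zero.2 (Nat.factorial_ne_zero _))
    set c := ‖Qz z₀‖ / 2 with hcdef
    have hQpos := norm_pos_iff.mpr hQ0
    have hc : 0 < c := by positivity
    have hKf := Kf_continuousOn (p := p) hpne hc
    have hopen : IsOpen {P : ℂ × ℂ | c < ‖P.2‖} :=
      isOpen_lt continuous_const (continuous_norm.comp continuous_snd)
    have hmem : (Pz z₀, Qz z₀) ∈ {P : ℂ × ℂ | c < ‖P.2‖} := by
      simp only [Set.mem_setOf_eq]
      rw [hcdef]
      linarith
    have hsub : {P : ℂ × ℂ | c < ‖P.2‖} ⊆ {P : ℂ × ℂ | c ≤ ‖P.2‖} :=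
      fun P hP => by
        simp only [Set.mem_setOf_eq] at hP ⊢
        exact hP.le
    have hKfat : ContinuousAt (Kf p) (Pz z₀, Qz z₀) :=
      (hKf.mono hsub).continuousAt (hopen.mem_nhds hmem)
    exact ContinuousAt.comp (x := z₀) hKfat hg.continuousAt
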